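/- Let Λ be a set with a left W-action (w,λ) ↦ wλ for a Coxeter group W with simple reflections S, and suppose given for each λ ∈ Λ a subgroup W_λ ⊆ Stab_W(λ) with W_{wλ} = w W_λ w⁻¹. Then there is an associative 𝓐-algebra structure (𝓐 = ℤ[v,v⁻¹], possibly without unit) on the free 𝓐-module with basis {T̃_w 1_λ : w ∈ W, λ ∈ Λ} such that: (T̃_w 1_λ)(T̃_{w'} 1_{λ'}) = 0 if w'λ' ≠ λ; (T̃_w 1_{w'λ'})(T̃_{w'} 1_{λ'}) = T̃_{ww'} 1_{λ'} whenever ℓ(ww') = ℓ(w)+ℓ(w'); and (T̃_s 1_{sλ'})(T̃_s 1_{λ'}) = T̃_1 1_{λ'} + (v−v⁻¹) c · T̃_s 1_{λ'} for s ∈ S, where c = 1 if s ∈ W_{λ'} and c = 0 otherwise. Moreover each element 1_λ := T̃_1 1_λ is idempotent and 1_λ 1_{λ'} = 0 for λ ≠ λ'. -/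

import Mathlib

open scoped Classical

namespace HeckeAux

open CoxeterSystem List

variable {B W : Type*} [Group W] {M : CoxeterMatrix B} (cs : CoxeterSystem M W)

local prefix:100 "s" => cs.simple
local prefix:100 "π" => cs.wordProd
local prefix:100 "ℓ" => cs.length

private lemma mul_pow_mul_aux (a b : W) (n : ℕ) : a * (b * a) ^ n = (a * b) ^ n * a := by
  induction n with
  | zero => simp
  | succ n ih =>
      rw [pow_succ, ← mul_assoc, ih, pow_succ]
      group

/-- Formula for the right inversion sequence of an alternating word. -/
lemma rightInvSeq_alternatingWord (i i' : B) (m : ℕ) :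
    cs.rightInvSeq (alternatingWord i i' m)
      = (List.range m).map (fun k => (s i' * s i) ^ (m - k) * s i) := by
  induction m generalizing i i' with
  | zero => simp [alternatingWord]
  | succ m ih =>
      rw [alternatingWord_succ, rightInvSeq_concat, ih i' i]
      rw [List.map_map, List.range_succ, List.map_append, List.concat_eq_append]
      congr 1
      · apply List.map_congr_left
        intro k hk
        have hk' : k < m := List.mem_range.mp hk
        have h1 : m + 1 - k = (m - k) + 1 := by omega
        simp only [Function.comp_apply, MulAut.conj_apply, inv_simple, h1]
        set n := m - k with hn
        have e1 : s i' * ((s i * s i') ^ n * s i') * s i'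
            = (s i' * (s i * s i') ^ n) * (s i' * s i') := by group
        have e2 : (s i' * s i) ^ (n + 1) * s i
            = ((s i' * s i) ^ n * s i') * (s i * s i) := by rw [pow_succ]; group
        rw [e1, e2, cs.simple_mul_simple_self, cs.simple_mul_simple_self, mul_one, mul_one,
          mul_pow_mul_aux]
      · simp only [List.concat_eq_append, List.map_cons, List.map_nil]
        congr 1
        have : m + 1 - m = 1 := by omega
        rw [this, pow_one, mul_assoc, simple_mul_simple_self, mul_one]

lemma count_rightInvSeq_braid_even (i i' : B) (t : W) :
    Even (List.count t (cs.rightInvSeq (alternatingWord i i' (2 * M i i')))) := by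
  rw [rightInvSeq_alternatingWord]
  set m := M i i' with hm
  have h2m : 2 * m = m + m := by omega
  rw [h2m, List.range_add, List.map_append, List.count_append]
  have key : ∀ k ∈ List.range m,
      (s i' * s i) ^ (m + m - k) * s i = (s i' * s i) ^ (m - k) * s i := by
    intro k hk
    have hk' : k < m := List.mem_range.mp hk
    have : m + m - k = m + (m - k) := by omega
    rw [this, pow_add, cs.simple_mul_simple_pow' i i', one_mul]
  have h1 : (List.range m).map (fun k => (s i' * s i) ^ (m + m - k) * s i)
      = (List.range m).map (fun k => (s i' * s i) ^ (m - k) * s i) :=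
    List.map_congr_left key
  have h2 : (List.map (m + ·) (List.range m)).map (fun k => (s i' * s i) ^ (m + m - k) * s i)
      = (List.range m).map (fun k => (s i' * s i) ^ (m - k) * s i) := by
    rw [List.map_map]
    apply List.map_congr_left
    intro k hk
    have hk' : k < m := List.mem_range.mp hk
    simp only [Function.comp_apply]
    congr 2
    omega
  rw [h1, h2]
  exact ⟨_, rfl⟩


/-- The sign-flipping function on `W × ℤˣ` attached to a simple reflection. -/
noncomputable def etaFun (i : B) : W × ℤˣ → W × ℤˣ :=
  fun p => (s i * p.1 * s i, if p.1 = s i then -p.2 else p.2)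

lemma etaFun_involutive (i : B) : Function.Involutive (etaFun cs i) := by
  rintro ⟨t, ε⟩
  by_cases h : t = s i
  · subst h
    simp [etaFun, cs.simple_mul_simple_self]
  · have h2 : s i * t * s i ≠ s i := by
      intro hc
      apply h
      have := congrArg (fun z => s i * z * s i) hc
      simpa [mul_assoc, cs.simple_mul_simple_self, ← mul_assoc,
        cs.simple_mul_simple_cancel_left, cs.simple_mul_simple_cancel_right] using this
    simp only [etaFun, if_neg h2, if_neg h]
    have h3 : s i * (s i * t * s i) * s i = t := by
      rw [← mul_assoc, ← mul_assoc, cs.simple_mul_simple_self, one_mul, mul_assoc,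
        cs.simple_mul_simple_self, mul_one]
    rw [h3]

/-- The permutation of `W × ℤˣ` attached to a simple reflection. -/
noncomputable def etaPerm (i : B) : Equiv.Perm (W × ℤˣ) :=
  (etaFun_involutive cs i).toPerm _

lemma etaPerm_apply (i : B) (p : W × ℤˣ) :
    etaPerm cs i p = (s i * p.1 * s i, if p.1 = s i then -p.2 else p.2) := rfl

lemma prod_map_etaPerm (ω : List B) (t : W) (ε : ℤˣ) :
    (ω.map (etaPerm cs)).prod (t, ε)
      = (π ω * t * (π ω)⁻¹, (-1) ^ (List.count t (cs.rightInvSeq ω)) * ε) := by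
  induction ω generalizing ε with
  | nil => simp
  | cons i ω ih =>
      rw [List.map_cons, List.prod_cons, Equiv.Perm.mul_apply, ih, etaPerm_apply]
      have hris : cs.rightInvSeq (i :: ω) = ((π ω)⁻¹ * s i * π ω) :: cs.rightInvSeq ω := rfl
      have hgrp : s i * (π ω * t * (π ω)⁻¹) * s i = π (i :: ω) * t * (π (i :: ω))⁻¹ := by
        rw [cs.wordProd_cons, mul_inv_rev, cs.inv_simple]
        group
      by_cases h : π ω * t * (π ω)⁻¹ = s i
      · have ht : t = (π ω)⁻¹ * s i * π ω := by rw [← h]; group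
        have hcount : List.count t (cs.rightInvSeq (i :: ω))
            = List.count t (cs.rightInvSeq ω) + 1 := by
          rw [hris, ← ht, List.count_cons_self]
        rw [if_pos h, hcount]
        refine Prod.ext hgrp ?_
        simp only [pow_succ]
        rw [mul_assoc, neg_one_mul, mul_neg]
      · have ht : t ≠ (π ω)⁻¹ * s i * π ω := fun hc => h (by rw [hc]; group)
        have hcount : List.count t (cs.rightInvSeq (i :: ω))
            = List.count t (cs.rightInvSeq ω) := by
          rw [hris, List.count_cons_of_ne ht.symm]
        rw [if_neg h, hcount]
        exact Prod.ext hgrp rfl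

lemma etaPerm_liftable : M.IsLiftable (etaPerm cs) := by
  intro i i'
  have key : ∀ m : ℕ, (etaPerm cs i * etaPerm cs i') ^ m
      = ((alternatingWord i i' (2 * m)).map (etaPerm cs)).prod := by
    intro m
    induction m with
    | zero => simp [alternatingWord]
    | succ m ih =>
        have h2 : 2 * (m + 1) = (2 * m) + 1 + 1 := by omega
        rw [h2, alternatingWord_succ', alternatingWord_succ',
          if_neg (by simp [parity_simps] : ¬ Even (2 * m + 1)),
          if_pos (even_two_mul m), List.map_cons, List.map_cons, List.prod_cons,
          List.prod_cons, pow_succ', ih, mul_assoc]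
  rw [key]
  apply Equiv.ext
  rintro ⟨t, ε⟩
  rw [prod_map_etaPerm]
  have hπ : π (alternatingWord i i' (2 * M i i')) = 1 := by
    rw [cs.prod_alternatingWord_eq_mul_pow, if_pos (even_two_mul _),
      Nat.mul_div_cancel_left _ (by norm_num : 0 < 2), one_mul, cs.simple_mul_simple_pow]
  obtain ⟨c, hc⟩ := count_rightInvSeq_braid_even cs i i' t
  rw [hπ, hc]
  have hu : ((-1 : ℤˣ)) ^ (c + c) = 1 := by
    rw [pow_add]
    exact Int.units_mul_self _
  rw [hu]
  simp

/-- The sign representation of the Coxeter group on `W × ℤˣ`. -/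
noncomputable def sgnRep : W →* Equiv.Perm (W × ℤˣ) :=
  cs.lift ⟨etaPerm cs, etaPerm_liftable cs⟩

lemma sgnRep_wordProd (ω : List B) :
    sgnRep cs (π ω) = (ω.map (etaPerm cs)).prod := by
  induction ω with
  | nil => simp [cs.wordProd_nil]
  | cons i ω ih =>
      rw [cs.wordProd_cons, map_mul, ih, List.map_cons, List.prod_cons]
      congr 1
      exact cs.lift_apply_simple (etaPerm_liftable cs) i

lemma count_parity {ω ω' : List B} (h : π ω = π ω') (t : W) :
    ((-1 : ℤˣ)) ^ (List.count t (cs.rightInvSeq ω))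
      = (-1) ^ (List.count t (cs.rightInvSeq ω')) := by
  have h1 := prod_map_etaPerm cs ω t 1
  have h2 := prod_map_etaPerm cs ω' t 1
  rw [← sgnRep_wordProd cs] at h1 h2
  rw [h] at h1
  have := congrArg Prod.snd (h1.symm.trans h2)
  simpa using this

/-- The (right) exchange property. -/
lemma exchange {ω : List B} (hω : cs.IsReduced ω) {i : B} (h : ℓ (π ω * s i) < ℓ (π ω)) :
    s i ∈ cs.rightInvSeq ω := by
  by_contra hmem
  obtain ⟨ω', hred', heq'⟩ := cs.exists_reduced_word' (π ω * s i)
  have hword : π (ω'.concat i) = π ω := by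
    rw [cs.wordProd_concat, ← heq', mul_assoc, cs.simple_mul_simple_self, mul_one]
  have hpar := count_parity cs hword (s i)
  have hcnt0 : List.count (s i) (cs.rightInvSeq ω) = 0 := List.count_eq_zero.mpr hmem
  have hconj : s i = MulAut.conj (s i) (s i) := by
    simp [MulAut.conj_apply, cs.inv_simple, mul_assoc, cs.simple_mul_simple_self]
  have hcnt1 : List.count (s i) (cs.rightInvSeq (ω'.concat i))
      = List.count (s i) (cs.rightInvSeq ω') + 1 := by
    rw [cs.rightInvSeq_concat, List.concat_eq_append, List.count_append]
    congr 1
    · have hm := List.count_map_of_injective (rightInvSeq cs ω') (⇑(MulAut.conj (s i)))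
        (MulAut.conj (s i)).injective (s i)
      rw [← hconj] at hm
      exact hm
    · simp
  rw [hcnt1, hcnt0, pow_zero] at hpar
  have heven : Even (List.count (s i) (cs.rightInvSeq ω') + 1) := by
    by_contra hodd'
    rw [Odd.neg_one_pow (Nat.not_even_iff_odd.mp hodd')] at hpar
    exact absurd hpar (by decide)
  have hmem' : s i ∈ cs.rightInvSeq ω' := by
    rcases Nat.eq_zero_or_pos (List.count (s i) (cs.rightInvSeq ω')) with h0 | hpos
    · exfalso; rw [h0] at heven; simp at heven
    · exact List.count_pos_iff.mp hpos
  have hinv := cs.isRightInversion_of_mem_rightInvSeq hred' hmem'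
  have hback : π ω' * s i = π ω := by
    rw [← heq', mul_assoc, cs.simple_mul_simple_self, mul_one]
  have hlt : ℓ (π ω') < ℓ (π ω) := by rw [← heq']; exact h
  have h2 := hinv.2
  rw [hback] at h2
  omega

lemma exchange' {ω : List B} (hω : cs.IsReduced ω) {i : B} (h : ℓ (π ω * s i) < ℓ (π ω)) :
    ∃ j < ω.length, π ω * s i = π (ω.eraseIdx j) := by
  obtain ⟨j, hj, hval⟩ := List.mem_iff_getElem.mp (exchange cs hω h)
  rw [cs.length_rightInvSeq] at hj
  refine ⟨j, hj, ?_⟩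
  have := cs.wordProd_mul_getD_rightInvSeq ω j
  rw [List.getD_eq_getElem _ 1 (by rw [cs.length_rightInvSeq]; exact hj), hval] at this
  exact this

/-- The key combinatorial lemma: if `ℓ(sw) = ℓ(wt) = ℓ(w) - 1` and `ℓ(swt) = ℓ(w)`,
then `sw = wt`. -/
lemma zlem {i i' : B} {w : W} (h1 : ℓ (s i * w) + 1 = ℓ w) (h2 : ℓ (w * s i') + 1 = ℓ w)
    (h3 : ℓ (s i * w * s i') = ℓ w) : s i * w = w * s i' := by
  obtain ⟨ωu, hu, hequ⟩ := cs.exists_reduced_word' (w * s i')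
  have hπω : π (i :: ωu) = s i * w * s i' := by
    rw [cs.wordProd_cons, ← hequ, mul_assoc]
  have hlenu : ωu.length = ℓ (w * s i') := by
    rw [CoxeterSystem.IsReduced, ← hequ] at hu
    omega
  have hred : cs.IsReduced (i :: ωu) := by
    rw [CoxeterSystem.IsReduced, hπω, h3, List.length_cons, hlenu]
    omega
  have hdesc : ℓ (π (i :: ωu) * s i') < ℓ (π (i :: ωu)) := by
    rw [hπω, mul_assoc, cs.simple_mul_simple_self, mul_one, h3]
    omega
  obtain ⟨j, hj, hej⟩ := exchange' cs hred hdesc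
  rw [hπω, mul_assoc, cs.simple_mul_simple_self, mul_one] at hej
  match j with
  | 0 =>
      rw [List.eraseIdx_cons_zero] at hej
      rw [hej, ← hequ]
  | (j + 1) =>
      exfalso
      rw [List.eraseIdx_cons_succ, cs.wordProd_cons] at hej
      have hw : w = π (ωu.eraseIdx j) := mul_left_cancel hej
      have hle := cs.length_wordProd_le (ωu.eraseIdx j)
      have hle2 : (ωu.eraseIdx j).length ≤ ωu.length := List.length_eraseIdx_le _ _
      rw [← hw] at hle
      omega


section Algebra

variable {Λ : Type*} [MulAction W Λ] (Wsub : Λ → Subgroup W)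

local notation "A" => LaurentPolynomial ℤ
local notation "X" => ((W × Λ) →₀ LaurentPolynomial ℤ)

/-- The quantum parameter `v - v⁻¹`. -/
noncomputable def qq : LaurentPolynomial ℤ :=
  LaurentPolynomial.T 1 - LaurentPolynomial.T (-1)

/-- Value of left multiplication by `T̃_{s i}` (summed over all `λ`-components)
on a basis element. -/
noncomputable def lval (i : B) : W × Λ → X := fun p =>
  Finsupp.single (s i * p.1, p.2) 1 +
    (if ℓ (s i * p.1) < ℓ p.1 ∧ s i ∈ Wsub (p.1 • p.2) then qq else 0) •
      Finsupp.single p 1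

/-- Value of right multiplication by `T̃_{s i} 1_{l'}` on a basis element. -/
noncomputable def rval (i : B) (l' : Λ) : W × Λ → X := fun p =>
  if s i • l' = p.2 then
    Finsupp.single (p.1 * s i, l') 1 +
      (if ℓ (p.1 * s i) < ℓ p.1 ∧ s i ∈ Wsub l' then qq else 0) •
        Finsupp.single (p.1, l') 1
  else 0

/-- Value of the projection `1_m ·` on a basis element. -/
noncomputable def pval (m : Λ) : W × Λ → X := fun p =>
  if p.1 • p.2 = m then Finsupp.single p 1 else 0

/-- Value of the `Λ`-component projection on a basis element. -/
noncomputable def qval (m : Λ) : W × Λ → X := fun p =>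
  if p.2 = m then Finsupp.single p 1 else 0

noncomputable def Lop (i : B) : X →ₗ[A] X :=
  Finsupp.linearCombination A (lval cs Wsub i)

noncomputable def Rop (i : B) (l' : Λ) : X →ₗ[A] X :=
  Finsupp.linearCombination A (rval cs Wsub i l')

noncomputable def Pop (m : Λ) : X →ₗ[A] X :=
  Finsupp.linearCombination A (pval (W := W) (Λ := Λ) m)

noncomputable def Qop (m : Λ) : X →ₗ[A] X :=
  Finsupp.linearCombination A (qval (W := W) (Λ := Λ) m)

@[simp] lemma Lop_single (i : B) (p : W × Λ) (c : A) :
    Lop cs Wsub i (Finsupp.single p c) = c • lval cs Wsub i p :=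
  Finsupp.linearCombination_single _ _ _

@[simp] lemma Rop_single (i : B) (l' : Λ) (p : W × Λ) (c : A) :
    Rop cs Wsub i l' (Finsupp.single p c) = c • rval cs Wsub i l' p :=
  Finsupp.linearCombination_single _ _ _

@[simp] lemma Pop_single (m : Λ) (p : W × Λ) (c : A) :
    Pop (W := W) (Λ := Λ) m (Finsupp.single p c) = c • pval m p :=
  Finsupp.linearCombination_single _ _ _

@[simp] lemma Qop_single (m : Λ) (p : W × Λ) (c : A) :
    Qop (W := W) (Λ := Λ) m (Finsupp.single p c) = c • qval m p :=
  Finsupp.linearCombination_single _ _ _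

lemma mem_Wsub_smul_iff
    (hconj : ∀ (w : W) (l : Λ),
      Wsub (w • l) = Subgroup.map (MulAut.conj w).toMonoidHom (Wsub l))
    (u x : W) (l : Λ) : x ∈ Wsub (u • l) ↔ u⁻¹ * x * u ∈ Wsub l := by
  rw [hconj u l]
  constructor
  · rintro ⟨h, hh, rfl⟩
    have : u⁻¹ * ((MulAut.conj u).toMonoidHom h) * u = h := by
      simp [MulAut.conj_apply]
      group
    rw [this]
    exact hh
  · intro hx
    refine ⟨u⁻¹ * x * u, hx, ?_⟩
    simp [MulAut.conj_apply]
    group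

lemma mem_flip
    (hconj : ∀ (w : W) (l : Λ),
      Wsub (w • l) = Subgroup.map (MulAut.conj w).toMonoidHom (Wsub l))
    {i i' : B} {w : W} (hz : s i * w = w * s i') (l' : Λ) :
    s i ∈ Wsub (w • (s i' • l')) ↔ s i' ∈ Wsub l' := by
  rw [← mul_smul, mem_Wsub_smul_iff Wsub hconj]
  have h1 : w⁻¹ * s i * w = s i' := by
    rw [mul_assoc, hz, ← mul_assoc, inv_mul_cancel, one_mul]
  have h2 : (w * s i')⁻¹ * s i * (w * s i') = s i' := by
    rw [mul_inv_rev, cs.inv_simple]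
    calc s i' * w⁻¹ * s i * (w * s i') = s i' * (w⁻¹ * s i * w) * s i' := by group
    _ = s i' * s i' * s i' := by rw [h1]
    _ = s i' := by rw [cs.simple_mul_simple_self, one_mul]
  rw [h2]

lemma smul_eq_self_of_mem
    (hstab : ∀ l : Λ, Wsub l ≤ MulAction.stabilizer W l)
    {i' : B} {l' : Λ} (h : s i' ∈ Wsub l') : s i' • l' = l' :=
  hstab l' h

private lemma ite_and_left_false {P Q : Prop} [Decidable (P ∧ Q)] (h : ¬ P) :
    (if P ∧ Q then (qq : A) else 0) = 0 := if_neg (fun hpq => h hpq.1)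

private lemma ite_and_left_true {P Q : Prop} [Decidable (P ∧ Q)] [Decidable Q] (h : P) :
    (if P ∧ Q then (qq : A) else 0) = (if Q then (qq : A) else 0) := by
  by_cases hq : Q
  · rw [if_pos ⟨h, hq⟩, if_pos hq]
  · rw [if_neg (fun hpq => hq hpq.2), if_neg hq]


lemma lval_rval_comm
    (hstab : ∀ l : Λ, Wsub l ≤ MulAction.stabilizer W l)
    (hconj : ∀ (w : W) (l : Λ),
      Wsub (w • l) = Subgroup.map (MulAut.conj w).toMonoidHom (Wsub l))
    (i i' : B) (l' : Λ) (w : W) (l : Λ) :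
    Lop cs Wsub i (rval cs Wsub i' l' (w, l)) = Rop cs Wsub i' l' (lval cs Wsub i (w, l)) := by
  by_cases hll : s i' • l' = l
  · have hwl : (w * s i') • l' = w • l := by rw [mul_smul, hll]
    simp only [rval, lval, if_pos hll, map_add, map_smul, Lop_single, Rop_single, one_smul,
      ← mul_assoc, hwl]
    have hL := cs.length_simple_mul w i
    have hR := cs.length_mul_simple w i'
    have hA := cs.length_simple_mul (w * s i') i
    rw [← mul_assoc] at hA
    have hB := cs.length_mul_simple (s i * w) i'
    rcases hL with hL | hL <;> rcases hR with hR | hR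
    · -- both increase
      simp only [ite_and_left_false (show ¬ (ℓ (w * s i') < ℓ w) by omega),
        ite_and_left_false (show ¬ (ℓ (s i * w) < ℓ w) by omega),
        zero_smul, add_zero]
      rcases hA with hA | hA
      · simp only [ite_and_left_false (show ¬ (ℓ (s i * w * s i') < ℓ (w * s i')) by omega),
          ite_and_left_false (show ¬ (ℓ (s i * w * s i') < ℓ (s i * w)) by omega),
          zero_smul, add_zero]
      · have hzl : s i * w = w * s i' := by
          have h1 : ℓ (s i * (s i * w)) + 1 = ℓ (s i * w) := by
            rw [cs.simple_mul_simple_cancel_left]; omega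
          have h2 : ℓ ((s i * w) * s i') + 1 = ℓ (s i * w) := by
            rw [mul_assoc]; rw [← mul_assoc]; omega
          have h3 : ℓ (s i * (s i * w) * s i') = ℓ (s i * w) := by
            rw [cs.simple_mul_simple_cancel_left]; omega
          have hz := zlem cs h1 h2 h3
          rw [cs.simple_mul_simple_cancel_left] at hz
          have h4 : w * s i' = s i * w := by
            conv_lhs => rw [hz]
            rw [mul_assoc (s i * w), cs.simple_mul_simple_self, mul_one]
          exact h4.symm
        have hmem : s i ∈ Wsub (w • l) ↔ s i' ∈ Wsub l' := by
          rw [← hll]; exact mem_flip cs Wsub hconj hzl l'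
        rw [ite_and_left_true (show ℓ (s i * w * s i') < ℓ (w * s i') by omega),
          ite_and_left_true (show ℓ (s i * w * s i') < ℓ (s i * w) by omega),
          hmem, ← hzl]
    · -- ℓ(siw) up, ℓ(wsi') down
      have hswt : ℓ (s i * w * s i') = ℓ w := by omega
      simp only [ite_and_left_false (show ¬ (ℓ (s i * w * s i') < ℓ (w * s i')) by omega),
        ite_and_left_false (show ¬ (ℓ (s i * w) < ℓ w) by omega),
        ite_and_left_true (show ℓ (w * s i') < ℓ w by omega),
        ite_and_left_true (show ℓ (s i * w * s i') < ℓ (s i * w) by omega),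
        zero_smul, add_zero, smul_add, smul_zero, zero_add]
    · -- ℓ(siw) down, ℓ(wsi') up
      have hswt : ℓ (s i * w * s i') = ℓ w := by omega
      simp only [ite_and_left_false (show ¬ (ℓ (w * s i') < ℓ w) by omega),
        ite_and_left_false (show ¬ (ℓ (s i * w * s i') < ℓ (s i * w)) by omega),
        ite_and_left_true (show ℓ (s i * w * s i') < ℓ (w * s i') by omega),
        ite_and_left_true (show ℓ (s i * w) < ℓ w by omega),
        zero_smul, add_zero, smul_add, smul_zero, zero_add]
    · -- both decrease
      by_cases hcR : s i' ∈ Wsub l'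
      · have hstl : l' = l := by
          rw [← hll]; exact (smul_eq_self_of_mem cs Wsub hstab hcR).symm
        subst hstl
        rcases hA with hA | hA
        · have hzl : s i * w = w * s i' := zlem cs (by omega) (by omega) (by omega)
          have hmem : s i ∈ Wsub (w • l') := by
            rw [← hll, mem_flip cs Wsub hconj hzl l']; exact hcR
          simp only [ite_and_left_false (show ¬ (ℓ (s i * w * s i') < ℓ (w * s i')) by omega),
            ite_and_left_false (show ¬ (ℓ (s i * w * s i') < ℓ (s i * w)) by omega),
            ite_and_left_true (show ℓ (w * s i') < ℓ w by omega),
            ite_and_left_true (show ℓ (s i * w) < ℓ w by omega),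
            if_pos hcR, if_pos hmem, zero_smul, add_zero, zero_add, ← hzl]
        · simp only [ite_and_left_true (show ℓ (s i * w * s i') < ℓ (w * s i') by omega),
            ite_and_left_true (show ℓ (s i * w * s i') < ℓ (s i * w) by omega),
            ite_and_left_true (show ℓ (w * s i') < ℓ w by omega),
            ite_and_left_true (show ℓ (s i * w) < ℓ w by omega),
            if_pos hcR]
          simp only [smul_add, smul_smul]
          rw [mul_comm HeckeAux.qq (if s i ∈ Wsub (w • l') then HeckeAux.qq else 0)]
          abel
      · have hC2 : (if ℓ (w * s i') < ℓ w ∧ s i' ∈ Wsub l' then qq else 0) = 0 :=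
          if_neg (fun h => hcR h.2)
        have hC4 : (if ℓ (s i * w * s i') < ℓ (s i * w) ∧ s i' ∈ Wsub l' then qq else 0) = 0 :=
          if_neg (fun h => hcR h.2)
        rw [hC2, hC4]
        simp only [zero_smul, add_zero, smul_zero, zero_add]
        rcases hA with hA | hA
        · have hzl : s i * w = w * s i' := zlem cs (by omega) (by omega) (by omega)
          have hmem : ¬ (s i ∈ Wsub (w • l)) := by
            rw [← hll, mem_flip cs Wsub hconj hzl l']; exact hcR
          simp only [ite_and_left_false (show ¬ (ℓ (s i * w * s i') < ℓ (w * s i')) by omega),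
            if_neg (show ¬ (ℓ (s i * w) < ℓ w ∧ s i ∈ Wsub (w • l)) from fun h => hmem h.2),
            zero_smul, add_zero]
        · simp only [ite_and_left_true (show ℓ (s i * w * s i') < ℓ (w * s i') by omega),
            ite_and_left_true (show ℓ (s i * w) < ℓ w by omega)]
  · simp only [rval, lval, if_neg hll, map_add, map_smul, Lop_single, Rop_single, one_smul,
      map_zero, smul_zero, add_zero]


lemma pval_rval_comm
    (hstab : ∀ l : Λ, Wsub l ≤ MulAction.stabilizer W l)
    (m : Λ) (i' : B) (l' : Λ) (w : W) (l : Λ) :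
    Pop (W := W) m (rval cs Wsub i' l' (w, l)) = Rop cs Wsub i' l' (pval m (w, l)) := by
  by_cases hll : s i' • l' = l
  · have hwl : (w * s i') • l' = w • l := by rw [mul_smul, hll]
    by_cases hcR : s i' ∈ Wsub l'
    · have hstl : l' = l := by
        rw [← hll]; exact (smul_eq_self_of_mem cs Wsub hstab hcR).symm
      subst hstl
      simp only [rval, pval, if_pos hll, map_add, map_smul, Pop_single, Rop_single, one_smul,
        hwl]
      by_cases hm : w • l' = m
      · simp only [if_pos hm, smul_add, Rop_single, one_smul, rval, if_pos hll]
      · simp only [if_neg hm, smul_zero, add_zero, map_zero]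
    · have hz : (if ℓ (w * s i') < ℓ w ∧ s i' ∈ Wsub l' then qq else 0) = 0 :=
        if_neg (fun h => hcR h.2)
      simp only [rval, pval, if_pos hll, hz, zero_smul, add_zero, map_add, map_smul,
        Pop_single, Rop_single, one_smul, hwl]
      by_cases hm : w • l = m
      · simp only [if_pos hm, zero_smul, add_zero, Rop_single, one_smul, rval, if_pos hll, hz]
      · simp only [if_neg hm, smul_zero, add_zero, map_zero, zero_smul]
  · simp only [rval, pval, if_neg hll, map_zero]
    by_cases hm : w • l = m
    · simp only [if_pos hm, Rop_single, one_smul, rval, if_neg hll]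
    · simp only [if_neg hm, map_zero]

lemma qval_lval_comm (m : Λ) (i : B) (w : W) (l : Λ) :
    Qop (W := W) m (lval cs Wsub i (w, l)) = Lop cs Wsub i (qval m (w, l)) := by
  by_cases hm : l = m
  · simp only [lval, qval, map_add, map_smul, Qop_single, Lop_single, one_smul, if_pos hm,
      smul_add]
  · simp only [lval, qval, map_add, map_smul, Qop_single, Lop_single, one_smul, if_neg hm,
      smul_zero, add_zero, map_zero]

lemma qval_pval_comm (m m' : Λ) (w : W) (l : Λ) :
    Qop (W := W) m (pval m' (w, l)) = Pop (W := W) m' (qval m (w, l)) := by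
  by_cases hm : l = m <;> by_cases hm' : w • l = m' <;>
    simp [pval, qval, hm, hm'] <;> split_ifs <;> simp [qval]

lemma Lop_comm_Rop
    (hstab : ∀ l : Λ, Wsub l ≤ MulAction.stabilizer W l)
    (hconj : ∀ (w : W) (l : Λ),
      Wsub (w • l) = Subgroup.map (MulAut.conj w).toMonoidHom (Wsub l))
    (i i' : B) (l' : Λ) :
    Lop cs Wsub i ∘ₗ Rop cs Wsub i' l' = Rop cs Wsub i' l' ∘ₗ Lop cs Wsub i := by
  apply Finsupp.lhom_ext
  rintro ⟨w, l⟩ c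
  simp only [LinearMap.comp_apply, Lop_single, Rop_single, map_smul]
  rw [lval_rval_comm cs Wsub hstab hconj]

lemma Pop_comm_Rop
    (hstab : ∀ l : Λ, Wsub l ≤ MulAction.stabilizer W l)
    (m : Λ) (i' : B) (l' : Λ) :
    Pop (W := W) m ∘ₗ Rop cs Wsub i' l' = Rop cs Wsub i' l' ∘ₗ Pop (W := W) m := by
  apply Finsupp.lhom_ext
  rintro ⟨w, l⟩ c
  simp only [LinearMap.comp_apply, Pop_single, Rop_single, map_smul]
  rw [pval_rval_comm cs Wsub hstab]

lemma Qop_comm_Lop (m : Λ) (i : B) :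
    Qop (W := W) m ∘ₗ Lop cs Wsub i = Lop cs Wsub i ∘ₗ Qop (W := W) m := by
  apply Finsupp.lhom_ext
  rintro ⟨w, l⟩ c
  simp only [LinearMap.comp_apply, Qop_single, Lop_single, map_smul]
  rw [qval_lval_comm cs Wsub]

lemma Qop_comm_Pop (m m' : Λ) :
    Qop (W := W) (Λ := Λ) m ∘ₗ Pop (W := W) m' = Pop (W := W) m' ∘ₗ Qop (W := W) m := by
  apply Finsupp.lhom_ext
  rintro ⟨w, l⟩ c
  simp only [LinearMap.comp_apply, Qop_single, Pop_single, map_smul]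
  rw [qval_pval_comm]

/-- Left multiplication by `T̃_w 1_l`, defined by recursion on the length of `w`. -/
noncomputable def Theta (w : W) (l : Λ) : X →ₗ[A] X :=
  if h : w = 1 then Pop (W := W) l
  else
    Lop cs Wsub (Classical.choose (cs.exists_leftDescent_of_ne_one h)) ∘ₗ
      Theta (s (Classical.choose (cs.exists_leftDescent_of_ne_one h)) * w) l
termination_by cs.length w
decreasing_by
  exact Classical.choose_spec (cs.exists_leftDescent_of_ne_one h)

lemma Theta_one (l : Λ) : Theta cs Wsub 1 l = Pop (W := W) l := by
  rw [Theta]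
  simp

lemma Theta_of_ne {w : W} (h : w ≠ 1) (l : Λ) :
    Theta cs Wsub w l
      = Lop cs Wsub (Classical.choose (cs.exists_leftDescent_of_ne_one h)) ∘ₗ
          Theta cs Wsub (s (Classical.choose (cs.exists_leftDescent_of_ne_one h)) * w) l := by
  rw [Theta]
  simp [h]


lemma Theta_comm_Rop
    (hstab : ∀ l : Λ, Wsub l ≤ MulAction.stabilizer W l)
    (hconj : ∀ (w : W) (l : Λ),
      Wsub (w • l) = Subgroup.map (MulAut.conj w).toMonoidHom (Wsub l)) :
    ∀ (w : W) (l : Λ) (i' : B) (l' : Λ),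
      Theta cs Wsub w l ∘ₗ Rop cs Wsub i' l' = Rop cs Wsub i' l' ∘ₗ Theta cs Wsub w l := by
  suffices H : ∀ (n : ℕ) (w : W), cs.length w = n → ∀ (l : Λ) (i' : B) (l' : Λ),
      Theta cs Wsub w l ∘ₗ Rop cs Wsub i' l' = Rop cs Wsub i' l' ∘ₗ Theta cs Wsub w l by
    exact fun w => H (cs.length w) w rfl
  intro n
  induction n using Nat.strong_induction_on with
  | _ n ih =>
      intro w hw l i' l'
      by_cases h : w = 1
      · subst h
        rw [Theta_one]
        exact Pop_comm_Rop cs Wsub hstab l i' l'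
      · rw [Theta_of_ne cs Wsub h]
        have hlt : ℓ (s (Classical.choose (cs.exists_leftDescent_of_ne_one h)) * w) < ℓ w :=
          Classical.choose_spec (cs.exists_leftDescent_of_ne_one h)
        rw [LinearMap.comp_assoc,
          ih (ℓ (s (Classical.choose (cs.exists_leftDescent_of_ne_one h)) * w)) (by omega) _
            rfl l i' l',
          ← LinearMap.comp_assoc, Lop_comm_Rop cs Wsub hstab hconj, LinearMap.comp_assoc]

lemma Theta_apply_unit :
    ∀ (w : W) (l l'' : Λ),
      Theta cs Wsub w l (Finsupp.single ((1 : W), l'') 1)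
        = if l'' = l then Finsupp.single (w, l) 1 else 0 := by
  suffices H : ∀ (n : ℕ) (w : W), cs.length w = n → ∀ (l l'' : Λ),
      Theta cs Wsub w l (Finsupp.single ((1 : W), l'') 1)
        = if l'' = l then Finsupp.single (w, l) 1 else 0 by
    exact fun w => H (cs.length w) w rfl
  intro n
  induction n using Nat.strong_induction_on with
  | _ n ih =>
      intro w hw l l''
      by_cases h : w = 1
      · subst h
        rw [Theta_one, Pop_single, one_smul, pval]
        by_cases hc : l'' = l
        · subst hc; simp
        · simp only [one_smul]
          rw [if_neg (by simpa using hc), if_neg hc]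
      · rw [Theta_of_ne cs Wsub h]
        set j := Classical.choose (cs.exists_leftDescent_of_ne_one h) with hj
        have hlt : ℓ (s j * w) < ℓ w := Classical.choose_spec (cs.exists_leftDescent_of_ne_one h)
        rw [LinearMap.comp_apply, ih (ℓ (s j * w)) (by omega) _ rfl l l'']
        by_cases hc : l'' = l
        · subst hc
          rw [if_pos rfl, if_pos rfl, Lop_single, one_smul, lval]
          simp only
          rw [cs.simple_mul_simple_cancel_left,
            ite_and_left_false (show ¬ (ℓ w < ℓ (s j * w)) by omega), zero_smul, add_zero]
        · rw [if_neg hc, if_neg hc, map_zero]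

lemma Theta_apply_ne :
    ∀ (w : W) (l : Λ) (w' : W) (l' : Λ), w' • l' ≠ l →
      Theta cs Wsub w l (Finsupp.single (w', l') 1) = 0 := by
  suffices H : ∀ (n : ℕ) (w : W), cs.length w = n → ∀ (l : Λ) (w' : W) (l' : Λ), w' • l' ≠ l →
      Theta cs Wsub w l (Finsupp.single (w', l') 1) = 0 by
    exact fun w => H (cs.length w) w rfl
  intro n
  induction n using Nat.strong_induction_on with
  | _ n ih =>
      intro w hw l w' l' hne
      by_cases h : w = 1
      · subst h
        rw [Theta_one, Pop_single, one_smul, pval]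
        simp only
        rw [if_neg hne]
      · rw [Theta_of_ne cs Wsub h]
        have hlt : ℓ (s (Classical.choose (cs.exists_leftDescent_of_ne_one h)) * w) < ℓ w :=
          Classical.choose_spec (cs.exists_leftDescent_of_ne_one h)
        rw [LinearMap.comp_apply,
          ih (ℓ (s (Classical.choose (cs.exists_leftDescent_of_ne_one h)) * w)) (by omega) _
            rfl l w' l' hne, map_zero]

lemma Theta_mul :
    ∀ (w w' : W) (l' : Λ), ℓ (w * w') = ℓ w + ℓ w' →
      Theta cs Wsub w (w' • l') (Finsupp.single (w', l') 1)
        = Finsupp.single (w * w', l') 1 := by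
  suffices H : ∀ (n : ℕ) (w : W), cs.length w = n → ∀ (w' : W) (l' : Λ),
      ℓ (w * w') = ℓ w + ℓ w' →
      Theta cs Wsub w (w' • l') (Finsupp.single (w', l') 1)
        = Finsupp.single (w * w', l') 1 by
    exact fun w => H (cs.length w) w rfl
  intro n
  induction n using Nat.strong_induction_on with
  | _ n ih =>
      intro w hw w' l' hlen
      by_cases h : w = 1
      · subst h
        rw [Theta_one, Pop_single, one_smul, pval]
        simp
      · rw [Theta_of_ne cs Wsub h]
        set j := Classical.choose (cs.exists_leftDescent_of_ne_one h) with hj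
        have hlt : ℓ (s j * w) < ℓ w := Classical.choose_spec (cs.exists_leftDescent_of_ne_one h)
        have hsjw : ℓ (s j * w) + 1 = ℓ w := by
          have := cs.length_simple_mul w j
          omega
        have hd := cs.length_simple_mul (w * w') j
        rw [← mul_assoc] at hd
        have hub := cs.length_mul_le (s j * w) w'
        have h1 : ℓ ((s j * w) * w') = ℓ (s j * w) + ℓ w' := by omega
        rw [LinearMap.comp_apply, ih (ℓ (s j * w)) (by omega) _ rfl w' l' h1, Lop_single,
          one_smul, lval]
        simp only
        have hc : s j * (s j * w * w') = w * w' := by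
          rw [← mul_assoc, ← mul_assoc, cs.simple_mul_simple_self, one_mul]
        rw [hc, ite_and_left_false (show ¬ (ℓ (w * w') < ℓ (s j * w * w')) by omega),
          zero_smul, add_zero]


lemma Qop_comm_Theta : ∀ (m : Λ) (w : W) (l : Λ),
    Qop (W := W) m ∘ₗ Theta cs Wsub w l = Theta cs Wsub w l ∘ₗ Qop (W := W) m := by
  suffices H : ∀ (n : ℕ) (w : W), cs.length w = n → ∀ (m : Λ) (l : Λ),
      Qop (W := W) m ∘ₗ Theta cs Wsub w l = Theta cs Wsub w l ∘ₗ Qop (W := W) m by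
    exact fun m w l => H (cs.length w) w rfl m l
  intro n
  induction n using Nat.strong_induction_on with
  | _ n ih =>
      intro w hw m l
      by_cases h : w = 1
      · subst h
        rw [Theta_one]
        exact Qop_comm_Pop m l
      · rw [Theta_of_ne cs Wsub h]
        have hlt : ℓ (s (Classical.choose (cs.exists_leftDescent_of_ne_one h)) * w) < ℓ w :=
          Classical.choose_spec (cs.exists_leftDescent_of_ne_one h)
        rw [← LinearMap.comp_assoc, Qop_comm_Lop, LinearMap.comp_assoc,
          ih (ℓ (s (Classical.choose (cs.exists_leftDescent_of_ne_one h)) * w)) (by omega) _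
            rfl m l, LinearMap.comp_assoc]

lemma Qop_single' (m : Λ) (w : W) (l : Λ) (c : A) :
    Qop (W := W) m (Finsupp.single (w, l) c)
      = if l = m then Finsupp.single (w, l) c else 0 := by
  rw [Qop_single, qval]
  by_cases hm : l = m
  · simp [hm]
  · simp [hm]

/-- The candidate multiplication, as a bilinear map. -/
noncomputable def Thetahat : X →ₗ[A] X →ₗ[A] X :=
  Finsupp.linearCombination A (fun p : W × Λ => Theta cs Wsub p.1 p.2)

@[simp] lemma Thetahat_single (p : W × Λ) (c : A) :
    Thetahat cs Wsub (Finsupp.single p c) = c • Theta cs Wsub p.1 p.2 :=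
  Finsupp.linearCombination_single _ _ _

lemma Thetahat_comm_Rop
    (hstab : ∀ l : Λ, Wsub l ≤ MulAction.stabilizer W l)
    (hconj : ∀ (w : W) (l : Λ),
      Wsub (w • l) = Subgroup.map (MulAut.conj w).toMonoidHom (Wsub l))
    (v : X) (i' : B) (l' : Λ) :
    Thetahat cs Wsub v ∘ₗ Rop cs Wsub i' l' = Rop cs Wsub i' l' ∘ₗ Thetahat cs Wsub v := by
  induction v using Finsupp.induction_linear with
  | zero => simp
  | add f g hf hg =>
      rw [map_add, LinearMap.add_comp, LinearMap.comp_add, hf, hg]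
  | single p c =>
      rw [Thetahat_single, LinearMap.smul_comp, LinearMap.comp_smul,
        Theta_comm_Rop cs Wsub hstab hconj]

lemma Thetahat_apply_unit (v : X) (m : Λ) :
    Thetahat cs Wsub v (Finsupp.single ((1 : W), m) 1) = Qop (W := W) m v := by
  induction v using Finsupp.induction_linear with
  | zero => simp
  | add f g hf hg => rw [map_add, LinearMap.add_apply, hf, hg, map_add]
  | single p c =>
      rcases p with ⟨w, l⟩
      rw [Thetahat_single, LinearMap.smul_apply, Theta_apply_unit, Qop_single']
      by_cases hm : m = l
      · subst hm; simp
      · rw [if_neg hm, if_neg (fun hh => hm hh.symm), smul_zero]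

lemma ext_of_comm {F G : X →ₗ[A] X}
    (hF : ∀ (i' : B) (l' : Λ), F ∘ₗ Rop cs Wsub i' l' = Rop cs Wsub i' l' ∘ₗ F)
    (hG : ∀ (i' : B) (l' : Λ), G ∘ₗ Rop cs Wsub i' l' = Rop cs Wsub i' l' ∘ₗ G)
    (h : ∀ m : Λ, F (Finsupp.single ((1 : W), m) 1) = G (Finsupp.single ((1 : W), m) 1)) :
    F = G := by
  have key : ∀ (n : ℕ) (w : W), cs.length w = n → ∀ l : Λ,
      F (Finsupp.single (w, l) 1) = G (Finsupp.single (w, l) 1) := by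
    intro n
    induction n using Nat.strong_induction_on with
    | _ n ih =>
        intro w hw l
        by_cases hone : w = 1
        · subst hone; exact h l
        · obtain ⟨i, hi⟩ := cs.exists_rightDescent_of_ne_one hone
          have hi' : ℓ (w * s i) < ℓ w := hi
          have hrw : Finsupp.single (w, l) 1
              = Rop cs Wsub i l (Finsupp.single (w * s i, s i • l) 1) := by
            rw [Rop_single, one_smul, rval]
            simp only
            rw [if_pos trivial, mul_assoc, cs.simple_mul_simple_self, mul_one,
              ite_and_left_false (show ¬ (ℓ w < ℓ (w * s i)) by omega), zero_smul, add_zero]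
          rw [hrw, ← LinearMap.comp_apply, hF, ← LinearMap.comp_apply G, hG,
            LinearMap.comp_apply, LinearMap.comp_apply,
            ih (ℓ (w * s i)) (by omega) _ rfl (s i • l)]
  apply Finsupp.lhom_ext
  rintro ⟨w, l⟩ c
  have hc : Finsupp.single (w, l) c = c • Finsupp.single (w, l) (1 : A) := by
    rw [Finsupp.smul_single, smul_eq_mul, mul_one]
  rw [hc, map_smul, map_smul, key (cs.length w) w rfl l]

lemma Thetahat_key
    (hstab : ∀ l : Λ, Wsub l ≤ MulAction.stabilizer W l)
    (hconj : ∀ (w : W) (l : Λ),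
      Wsub (w • l) = Subgroup.map (MulAut.conj w).toMonoidHom (Wsub l))
    (w : W) (l : Λ) (w' : W) (l' : Λ) :
    Thetahat cs Wsub (Theta cs Wsub w l (Finsupp.single (w', l') 1))
      = Theta cs Wsub w l ∘ₗ Theta cs Wsub w' l' := by
  apply ext_of_comm cs Wsub
  · intro i'' l''
    exact Thetahat_comm_Rop cs Wsub hstab hconj _ i'' l''
  · intro i'' l''
    rw [LinearMap.comp_assoc, Theta_comm_Rop cs Wsub hstab hconj, ← LinearMap.comp_assoc,
      Theta_comm_Rop cs Wsub hstab hconj, LinearMap.comp_assoc]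
  · intro m
    rw [Thetahat_apply_unit, LinearMap.comp_apply, Theta_apply_unit]
    have hQ : Qop (W := W) m (Theta cs Wsub w l (Finsupp.single (w', l') 1))
        = Theta cs Wsub w l (Qop (W := W) m (Finsupp.single (w', l') 1)) := by
      rw [← LinearMap.comp_apply, Qop_comm_Theta, LinearMap.comp_apply]
    rw [hQ, Qop_single']
    by_cases hm : m = l'
    · subst hm; simp
    · rw [if_neg (fun hh => hm hh.symm), if_neg hm]

lemma Thetahat_assoc
    (hstab : ∀ l : Λ, Wsub l ≤ MulAction.stabilizer W l)
    (hconj : ∀ (w : W) (l : Λ),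
      Wsub (w • l) = Subgroup.map (MulAut.conj w).toMonoidHom (Wsub l))
    (x y : X) :
    Thetahat cs Wsub (Thetahat cs Wsub x y)
      = Thetahat cs Wsub x ∘ₗ Thetahat cs Wsub y := by
  induction x using Finsupp.induction_linear with
  | zero => simp
  | add f g hf hg => rw [map_add, LinearMap.add_apply, map_add, hf, hg, LinearMap.add_comp]
  | single p c =>
      induction y using Finsupp.induction_linear with
      | zero => simp
      | add f g hf hg =>
          rw [map_add, map_add, hf, hg, map_add, LinearMap.comp_add]
      | single p' c' =>
          rcases p with ⟨w, l⟩
          rcases p' with ⟨w', l'⟩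
          rw [Thetahat_single, Thetahat_single, LinearMap.smul_apply]
          have hc : Finsupp.single ((w', l') : W × Λ) c'
              = c' • Finsupp.single ((w', l') : W × Λ) (1 : A) := by
            rw [Finsupp.smul_single, smul_eq_mul, mul_one]
          rw [hc, map_smul, map_smul, map_smul, Thetahat_key cs Wsub hstab hconj,
            LinearMap.smul_comp, LinearMap.comp_smul]


lemma Theta_simple
    (hconj : ∀ (w : W) (l : Λ),
      Wsub (w • l) = Subgroup.map (MulAut.conj w).toMonoidHom (Wsub l))
    (i : B) (l' : Λ) :
    Theta cs Wsub (s i) (s i • l') (Finsupp.single (s i, l') 1)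
      = Finsupp.single ((1 : W), l') 1 +
        (if s i ∈ Wsub l' then qq else 0) • Finsupp.single (s i, l') 1 := by
  have hne : (s i : W) ≠ 1 := by
    intro hc
    have h1 := cs.length_simple i
    rw [hc, cs.length_one] at h1
    omega
  rw [Theta_of_ne cs Wsub hne]
  set j := Classical.choose (cs.exists_leftDescent_of_ne_one hne) with hj
  have hlt : ℓ (s j * s i) < ℓ (s i) :=
    Classical.choose_spec (cs.exists_leftDescent_of_ne_one hne)
  have hz : ℓ (s j * s i) = 0 := by
    have := cs.length_simple i
    omega
  have hji : s j * s i = 1 := cs.length_eq_zero_iff.mp hz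
  have hsj : s j = s i := by
    have h2 : s j = (s i)⁻¹ := eq_inv_of_mul_eq_one_left hji
    rw [cs.inv_simple] at h2
    exact h2
  rw [LinearMap.comp_apply, hji, Theta_one, Pop_single, one_smul, pval]
  simp only
  rw [if_pos trivial, Lop_single, one_smul, lval]
  simp only
  have hcond : (ℓ (1 : W) < ℓ (s i) ∧ s j ∈ Wsub ((s i : W) • l')) ↔ s i ∈ Wsub l' := by
    rw [and_iff_right (by rw [cs.length_one]; have := cs.length_simple i; omega :
      ℓ (1 : W) < ℓ (s i)), hsj, mem_Wsub_smul_iff Wsub hconj]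
    have h3 : (s i)⁻¹ * s i * s i = s i := by rw [inv_mul_cancel, one_mul]
    rw [h3]
  simp only [hcond, hji]

end Algebra

end HeckeAux

/-- The Hecke algebra attached to a `W`-set `Λ` and a family of subgroups
`W_λ ⊆ Stab_W(λ)` with `W_{wλ} = w W_λ w⁻¹`:  on the free `ℤ[v,v⁻¹]`-module with basis
`{T̃_w 1_λ : w ∈ W, λ ∈ Λ}` there is an associative bilinear multiplication `μ` with
`(T̃_w 1_λ)(T̃_{w'} 1_{λ'}) = 0` if `w'λ' ≠ λ`;
`(T̃_w 1_{w'λ'})(T̃_{w'} 1_{λ'}) = T̃_{ww'} 1_{λ'}` when `ℓ(ww') = ℓ(w)+ℓ(w')`;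
`(T̃_s 1_{sλ'})(T̃_s 1_{λ'}) = T̃_1 1_{λ'} + (v−v⁻¹) c T̃_s 1_{λ'}` with `c = 1` iff
`s ∈ W_{λ'}`; moreover the `1_λ = T̃_1 1_λ` are orthogonal idempotents. -/
theorem hecke_algebra_with_characters_exists
    {B W : Type*} [Group W] {M : CoxeterMatrix B} (cs : CoxeterSystem M W)
    {Λ : Type*} [MulAction W Λ]
    (Wsub : Λ → Subgroup W)
    (hstab : ∀ l : Λ, Wsub l ≤ MulAction.stabilizer W l)
    (hconj : ∀ (w : W) (l : Λ),
      Wsub (w • l) = Subgroup.map (MulAut.conj w).toMonoidHom (Wsub l)) :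
    ∃ μ : ((W × Λ) →₀ LaurentPolynomial ℤ) →ₗ[LaurentPolynomial ℤ]
          ((W × Λ) →₀ LaurentPolynomial ℤ) →ₗ[LaurentPolynomial ℤ]
          ((W × Λ) →₀ LaurentPolynomial ℤ),
      (∀ x y z, μ (μ x y) z = μ x (μ y z)) ∧
      (∀ (w w' : W) (l l' : Λ), w' • l' ≠ l →
        μ (Finsupp.single (w, l) 1) (Finsupp.single (w', l') 1) = 0) ∧
      (∀ (w w' : W) (l' : Λ), cs.length (w * w') = cs.length w + cs.length w' →
        μ (Finsupp.single (w, w' • l') 1) (Finsupp.single (w', l') 1)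
          = Finsupp.single (w * w', l') 1) ∧
      (∀ (i : B) (l' : Λ),
        μ (Finsupp.single (cs.simple i, cs.simple i • l') 1)
            (Finsupp.single (cs.simple i, l') 1)
          = Finsupp.single ((1 : W), l') 1 +
            (if cs.simple i ∈ Wsub l' then
              ((LaurentPolynomial.T 1 - LaurentPolynomial.T (-1) : LaurentPolynomial ℤ))
            else 0) • Finsupp.single (cs.simple i, l') 1) ∧
      (∀ l : Λ, μ (Finsupp.single ((1 : W), l) 1) (Finsupp.single ((1 : W), l) 1)
          = Finsupp.single ((1 : W), l) 1) ∧
      (∀ l l' : Λ, l ≠ l' →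
        μ (Finsupp.single ((1 : W), l) 1) (Finsupp.single ((1 : W), l') 1) = 0) := by
  refine ⟨HeckeAux.Thetahat cs Wsub, ?_, ?_, ?_, ?_, ?_, ?_⟩
  · intro x y z
    rw [HeckeAux.Thetahat_assoc cs Wsub hstab hconj x y]
    rfl
  · intro w w' l l' hne
    rw [HeckeAux.Thetahat_single, one_smul]
    exact HeckeAux.Theta_apply_ne cs Wsub w l w' l' hne
  · intro w w' l' hlen
    rw [HeckeAux.Thetahat_single, one_smul]
    exact HeckeAux.Theta_mul cs Wsub w w' l' hlen
  · intro i l'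
    rw [HeckeAux.Thetahat_single, one_smul]
    have h := HeckeAux.Theta_simple cs Wsub hconj i l'
    rw [show HeckeAux.qq = (LaurentPolynomial.T 1 - LaurentPolynomial.T (-1) : LaurentPolynomial ℤ)
      from rfl] at h
    exact h
  · intro l
    rw [HeckeAux.Thetahat_single, one_smul, HeckeAux.Theta_apply_unit, if_pos rfl]
  · intro l l' hne
    rw [HeckeAux.Thetahat_single, one_smul, HeckeAux.Theta_apply_unit,
      if_neg (fun hh => hne hh.symm)]
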